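/- Let p be an odd prime, m an even positive integer, q = p^k with 1 ≤ k ≤ m - 1 and m / gcd(k,m) odd. Then -1 is not a (q-1)-st power in the multiplicative group of the field F_{p^m}, i.e., there is no x in F_{p^m}^× with x^{q-1} = -1. -/
import Mathlib


theorem stmt_4 (p m k : ℕ) (hp : p.Prime) (hodd : Odd p) (hm : Even m) (hm0 : 0 < m)
    (hk1 : 1 ≤ k) (hk2 : k ≤ m - 1) (hko : Odd (m / Nat.gcd k m))
    (F : Type) [Field F] [Fintype F] (hF : Fintype.card F = p ^ m) :
    ¬ ∃ x : F, x ≠ 0 ∧ x ^ (p ^ k - 1) = -1 := by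
  rintro ⟨x, hx0, hx⟩
  set g := Nat.gcd k m with hg
  have hgm : g ∣ m := Nat.gcd_dvd_right k m
  have hgk : g ∣ k := Nat.gcd_dvd_left k m
  set s := m / g with hs
  have hms : g * s = m := Nat.mul_div_cancel' hgm
  set S := ∑ i ∈ Finset.range s, (p ^ g) ^ i with hS
  have hpg1 : 1 ≤ p ^ g := Nat.one_le_pow _ _ hp.pos
  have hpm1 : 1 ≤ p ^ m := Nat.one_le_pow _ _ hp.pos
  have key : p ^ m - 1 = (p ^ g - 1) * S := by
    zify [hpg1, hpm1]
    push_cast [hS]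
    rw [mul_comm, geom_sum_mul, ← pow_mul, hms]
  have hSodd : Odd S := by
    rw [Nat.odd_iff, hS, Finset.sum_nat_mod]
    have h1 : ∀ i ∈ Finset.range s, (p ^ g) ^ i % 2 = 1 :=
      fun i _ => Nat.odd_iff.mp ((hodd.pow).pow)
    rw [Finset.sum_congr rfl h1]
    simpa using Nat.odd_iff.mp hko
  set N := p ^ m - 1 with hN
  set t := p ^ k - 1 with ht
  set d := Nat.gcd t N with hd
  have hdt : d ∣ t := Nat.gcd_dvd_left _ _
  have hdN : d ∣ N := Nat.gcd_dvd_right _ _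
  have hgd : p ^ g - 1 ∣ d := by
    refine Nat.dvd_gcd ?_ ?_
    · have h2 := Nat.sub_dvd_pow_sub_pow (p ^ g) 1 (k / g)
      rwa [one_pow, ← pow_mul, Nat.mul_div_cancel' hgk] at h2
    · have h2 := Nat.sub_dvd_pow_sub_pow (p ^ g) 1 s
      rwa [one_pow, ← pow_mul, hms] at h2
  obtain ⟨e, he⟩ := hgd
  have hpg0 : 0 < p ^ g - 1 := by
    have h2 : 2 ≤ p := hp.two_le
    have hg0 : 0 < g := Nat.gcd_pos_of_pos_left m hk1
    have : 2 ≤ p ^ g := by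
      calc 2 = 2 ^ 1 := rfl
      _ ≤ p ^ g := Nat.pow_le_pow_left h2 1 |>.trans (Nat.pow_le_pow_right (by omega) hg0)
    omega
  have hSeq : S = e * (N / d) := by
    apply Nat.eq_of_mul_eq_mul_left hpg0
    rw [← mul_assoc, ← he, ← key]
    exact (Nat.mul_div_cancel' hdN).symm
  have hNd_odd : Odd (N / d) := by
    rw [hSeq, Nat.odd_mul] at hSodd
    exact hSodd.2
  have hxN : x ^ N = 1 := by
    have h3 := FiniteField.pow_card_sub_one_eq_one x hx0
    rwa [hF] at h3
  have h1 : x ^ (t * (N / d)) = -1 := by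
    rw [pow_mul, hx, Odd.neg_one_pow hNd_odd]
  have h2 : x ^ (t * (N / d)) = 1 := by
    obtain ⟨u, hu⟩ := hdt
    have h4 : t * (N / d) = u * N := by
      rw [hu, mul_assoc, mul_comm u, ← mul_assoc, Nat.mul_div_cancel' hdN, mul_comm]
    rw [h4, mul_comm, pow_mul, hxN, one_pow]
  have hcontr : (-1 : F) = 1 := by rw [← h1, h2]
  have h2z : (2 : F) = 0 := by linear_combination -hcontr
  have hchar : ringChar F = 2 := by
    have hdvd2 : ringChar F ∣ 2 := (ringChar.spec F 2).mp (by exact_mod_cast h2z)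
    have hprime := CharP.char_is_prime F (ringChar F)
    exact (Nat.prime_dvd_prime_iff_eq hprime Nat.prime_two).mp hdvd2
  have heven : Fintype.card F % 2 = 0 := (FiniteField.even_card_iff_char_two).mp hchar
  rw [hF] at heven
  have hodm : p ^ m % 2 = 1 := Nat.odd_iff.mp hodd.pow
  omega
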